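/- Let A be a group and B a normal subgroup of A. If both B and A/B satisfy the Tits alternative, then A satisfies the Tits alternative. -/

import Mathlib

/-- A group is virtually solvable if it has a solvable subgroup of finite index. -/
def VirtuallySolvable (G : Type*) [Group G] : Prop :=
  ∃ H : Subgroup G, H.FiniteIndex ∧ IsSolvable H

/-- A group satisfies the Tits alternative if every subgroup either contains a
free non-abelian subgroup (a copy of the free group on two generators) or is
virtually solvable. -/
def SatisfiesTitsAlternative (G : Type*) [Group G] : Prop :=
  ∀ H : Subgroup G,
    (∃ F : Subgroup H, Nonempty (F ≃* FreeGroup (Fin 2))) ∨ VirtuallySolvable H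


section Aux
variable {G G' : Type*} [Group G] [Group G']

/-- solvable transfers along MulEquiv -/
theorem isSolvable_congr (e : G ≃* G') (h : IsSolvable G) : IsSolvable G' :=
  haveI : Group.IsSolvable G := h; solvable_of_surjective (f := e.toMonoidHom) e.surjective

theorem isSolvable_subgroup_of_le {H K : Subgroup G} (hle : H ≤ K) (hK : IsSolvable K) :
    IsSolvable H := by
  have : IsSolvable (H.subgroupOf K) := by
    haveI : Group.IsSolvable K := hK; exact (inferInstance : Group.IsSolvable (H.subgroupOf K))
  exact isSolvable_congr (Subgroup.subgroupOfEquivOfLe hle) this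

theorem isSolvable_map {f : G →* G'} {K : Subgroup G} (hK : IsSolvable K) :
    IsSolvable (K.map f) := by
  have hs : Function.Surjective ((f.comp K.subtype).rangeRestrict) :=
    MonoidHom.rangeRestrict_surjective _
  have : (f.comp K.subtype).range = K.map f := by
    rw [MonoidHom.range_comp, Subgroup.range_subtype]
  rw [← this]
  exact (haveI : Group.IsSolvable K := hK; solvable_of_surjective hs)

theorem virtuallySolvable_congr (e : G ≃* G') (h : VirtuallySolvable G) :
    VirtuallySolvable G' := by
  obtain ⟨H, hfi, hs⟩ := h
  refine ⟨H.map e.toMonoidHom, ?_, isSolvable_map hs⟩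
  constructor
  rw [Subgroup.map_equiv_eq_comap_symm', Subgroup.index_comap_of_surjective _ e.symm.surjective]
  exact hfi.index_ne_zero

theorem virtuallySolvable_of_finiteIndex (K : Subgroup G) (hfi : K.FiniteIndex)
    (h : VirtuallySolvable K) : VirtuallySolvable G := by
  obtain ⟨S, hSfi, hSs⟩ := h
  refine ⟨S.map K.subtype, ?_, isSolvable_map hSs⟩
  constructor
  have hle : S.map K.subtype ≤ K := Subgroup.map_subtype_le S
  have h1 : (S.map K.subtype).relIndex K * K.index = (S.map K.subtype).index :=
    Subgroup.relIndex_mul_index hle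
  have h2 : (S.map K.subtype).relIndex K = S.index := by
    rw [Subgroup.relIndex, ← Subgroup.comap_subtype,
      Subgroup.comap_map_eq_self_of_injective K.subtype_injective]
  rw [← h1, h2]
  exact Nat.mul_ne_zero hSfi.index_ne_zero hfi.index_ne_zero
end Aux

section Free
variable {G G' : Type*} [Group G] [Group G']

def HasFree (G : Type*) [Group G] : Prop :=
  ∃ φ : FreeGroup (Fin 2) →* G, Function.Injective φ

theorem hasFree_iff : HasFree G ↔ ∃ F : Subgroup G, Nonempty (F ≃* FreeGroup (Fin 2)) := by
  constructor
  · rintro ⟨φ, hφ⟩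
    exact ⟨φ.range, ⟨(MonoidHom.ofInjective hφ).symm⟩⟩
  · rintro ⟨F, ⟨e⟩⟩
    exact ⟨F.subtype.comp e.symm.toMonoidHom,
      F.subtype_injective.comp e.symm.injective⟩

theorem hasFree_of_injective {f : G →* G'} (hf : Function.Injective f) (h : HasFree G) :
    HasFree G' := by
  obtain ⟨φ, hφ⟩ := h
  exact ⟨f.comp φ, hf.comp hφ⟩

theorem hasFree_of_surjective {f : G →* G'} (hf : Function.Surjective f) (h : HasFree G') :
    HasFree G := by
  obtain ⟨φ, hφ⟩ := h
  choose x hx using fun i : Fin 2 => hf (φ (FreeGroup.of i))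
  refine ⟨FreeGroup.lift x, ?_⟩
  have hcomp : f.comp (FreeGroup.lift x) = φ := by
    apply FreeGroup.ext_hom
    intro a
    simp [hx]
  have : Function.Injective (f.comp (FreeGroup.lift x)) := hcomp ▸ hφ
  exact fun a b hab => this (by simp [hab])
end Free

section Rad
variable {Q : Type*} [Group Q]

theorem isSolvable_sup {K₁ K₂ : Subgroup Q} (h₂ : K₂.Normal)
    (s₁ : IsSolvable K₁) (s₂ : IsSolvable K₂) : IsSolvable ↥(K₁ ⊔ K₂) := by
  have : K₂.Normal := h₂
  set L := K₁ ⊔ K₂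
  have hK₂L : K₂ ≤ L := le_sup_right
  have hnorm : (K₂.subgroupOf L).Normal := inferInstance
  have i1 : IsSolvable ↥(K₂.subgroupOf L) :=
    isSolvable_congr (Subgroup.subgroupOfEquivOfLe hK₂L).symm s₂
  have i2 : IsSolvable (L ⧸ K₂.subgroupOf L) := by
    have e := QuotientGroup.quotientInfEquivProdNormalQuotient K₁ K₂
    have : IsSolvable (K₁ ⧸ K₂.subgroupOf K₁) := by
      haveI : Group.IsSolvable K₁ := s₁; exact (inferInstance : Group.IsSolvable (K₁ ⧸ K₂.subgroupOf K₁))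
    exact isSolvable_congr e this
  exact solvable_of_ker_le_range (K₂.subgroupOf L).subtype (hG' := i1) (hG'' := i2)
    (QuotientGroup.mk' (K₂.subgroupOf L))
    (by rw [Subgroup.range_subtype, QuotientGroup.ker_mk'])

/-- In a finite group, the join of all normal solvable subgroups is solvable. -/
theorem isSolvable_radical [Finite Q] :
    IsSolvable ↥(sSup {K : Subgroup Q | K.Normal ∧ IsSolvable ↥K}) := by
  have : Finite (Subgroup Q) :=
    Finite.of_injective (fun K => (K : Set Q)) SetLike.coe_injective
  have hfin : {K : Subgroup Q | K.Normal ∧ IsSolvable ↥K}.Finite := Set.toFinite _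
  obtain ⟨s, hs⟩ := hfin.exists_finset_coe
  rw [← hs, ← Finset.sup_id_eq_sSup]
  have key : ((s.sup id).Normal ∧ IsSolvable ↥(s.sup id)) := by
    refine Finset.sup_induction (p := fun K : Subgroup Q => K.Normal ∧ IsSolvable ↥K) ?_ ?_ ?_
    · exact ⟨inferInstance, (inferInstance : Group.IsSolvable _)⟩
    · rintro a ⟨na, sa⟩ b ⟨nb, sb⟩
      have := nb
      exact ⟨by exact Subgroup.sup_normal a b (hH := na) (hK := nb), isSolvable_sup nb sa sb⟩
    · intro K hK
      have : K ∈ ({K : Subgroup Q | K.Normal ∧ IsSolvable ↥K} : Set _) := by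
        rw [← hs]; exact_mod_cast hK
      exact this
  exact key.2
end Rad

-- test isSolvable_congr needed
section LemB
variable {G : Type*} [Group G]

theorem virtuallySolvable_of_finite_normal (F : Subgroup G) [F.Normal] [Finite F]
    (h : IsSolvable (G ⧸ F)) : VirtuallySolvable G := by
  have hFinAut : Finite (MulAut ↥F) :=
    Finite.of_injective (fun e => (e : ↥F → ↥F)) DFunLike.coe_injective
  set c : G →* MulAut ↥F := MulAut.conjNormal with hc
  refine ⟨c.ker, inferInstance, ?_⟩
  set g : ↥c.ker →* G ⧸ F := (QuotientGroup.mk' F).comp c.ker.subtype with hg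
  have hkerg : g.ker = F.subgroupOf c.ker := by
    rw [hg, ← MonoidHom.comap_ker, QuotientGroup.ker_mk', Subgroup.comap_subtype]
  have hab : IsSolvable ↥g.ker := by
    apply isSolvable_of_comm
    rintro ⟨⟨a, haK⟩, haF⟩ ⟨⟨b, hbK⟩, hbF⟩
    have haF' : a ∈ F := by
      rw [hkerg] at haF; exact haF
    have hb1 : c b = 1 := hbK
    have : (c b) ⟨a, haF'⟩ = ⟨a, haF'⟩ := by rw [hb1]; rfl
    have hcomm : b * a * b⁻¹ = a := by
      have := congrArg (Subtype.val) this
      rwa [hc, MulAut.conjNormal_apply] at this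
    ext
    show a * b = b * a
    conv_lhs => rw [← hcomm]
    group
  exact solvable_of_ker_le_range g.ker.subtype g (hG' := hab) (hG'' := h) (by rw [Subgroup.range_subtype])
end LemB
section Main
variable {G : Type*} [Group G]

theorem virtuallySolvable_extension (N : Subgroup G) [N.Normal]
    (hN : VirtuallySolvable ↥N) (hQ : IsSolvable (G ⧸ N)) : VirtuallySolvable G := by
  classical
  obtain ⟨S₀, hS₀fi, hS₀s⟩ := hN
  set S : Subgroup ↥N := S₀.normalCore with hS
  have hSs : IsSolvable ↥S := isSolvable_subgroup_of_le S₀.normalCore_le hS₀s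
  have hSfi : S.FiniteIndex := by rw [hS]; exact @Subgroup.finiteIndex_normalCore _ _ _ hS₀fi
  set 𝒮 : Set (Subgroup ↥N) := {K | K.Normal ∧ IsSolvable ↥K ∧ K.FiniteIndex} with h𝒮
  set W : Subgroup ↥N := sSup 𝒮 with hW
  have hSW : S ≤ W := le_sSup ⟨inferInstance, hSs, hSfi⟩
  have hWfi : W.FiniteIndex := @Subgroup.finiteIndex_of_le _ _ _ _ hSfi hSW
  -- W is solvable
  have hWs : IsSolvable ↥W := by
    have : Finite (↥N ⧸ S) := @Subgroup.finite_quotient_of_finiteIndex _ _ _ hSfi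
    set Rad : Subgroup (↥N ⧸ S) := sSup {K | K.Normal ∧ IsSolvable ↥K} with hRad
    have hRadS : IsSolvable ↥Rad := isSolvable_radical
    set p : ↥W →* ↥N ⧸ S := (QuotientGroup.mk' S).comp W.subtype with hp
    have hkerp : p.ker = S.subgroupOf W := by
      rw [hp, ← MonoidHom.comap_ker, QuotientGroup.ker_mk', Subgroup.comap_subtype]
    have hrangep : p.range = W.map (QuotientGroup.mk' S) := by
      rw [hp, MonoidHom.range_comp, Subgroup.range_subtype]
    have hrle : p.range ≤ Rad := by
      rw [hrangep, hW, (Subgroup.gc_map_comap (QuotientGroup.mk' S)).l_sSup]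
      refine iSup_le fun K => iSup_le fun hK => le_sSup ?_
      obtain ⟨hKn, hKs, _⟩ := hK
      exact ⟨hKn.map _ (QuotientGroup.mk'_surjective S), isSolvable_map hKs⟩
    have i1 : IsSolvable ↥p.rangeRestrict.ker := by
      rw [MonoidHom.ker_rangeRestrict, hkerp]
      exact isSolvable_congr (Subgroup.subgroupOfEquivOfLe hSW).symm hSs
    have i2 : IsSolvable ↥p.range := isSolvable_subgroup_of_le hrle hRadS
    exact solvable_of_ker_le_range p.rangeRestrict.ker.subtype p.rangeRestrict (hG' := i1) (hG'' := i2)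
      (by rw [Subgroup.range_subtype])
  -- push W to G
  set W_G : Subgroup G := W.map N.subtype with hWG
  have hWGs : IsSolvable ↥W_G := isSolvable_map hWs
  have hWGN : W_G ≤ N := Subgroup.map_subtype_le W
  have hWGnorm : W_G.Normal := by
    constructor
    intro x hx g
    rw [hWG] at hx
    obtain ⟨w, hwW, rfl⟩ := Subgroup.mem_map.mp hx
    have hmaple : W.map (MulAut.conjNormal (H := N) g).toMonoidHom ≤ W := by
      rw [hW, (Subgroup.gc_map_comap _).l_sSup]
      refine iSup_le fun K => iSup_le fun hK => le_sSup ?_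
      obtain ⟨hKn, hKs, hKfi⟩ := hK
      refine ⟨hKn.map _ (MulAut.conjNormal g).surjective, isSolvable_map hKs, ?_⟩
      constructor
      rw [Subgroup.map_equiv_eq_comap_symm',
        Subgroup.index_comap_of_surjective _ (MulAut.conjNormal g).symm.surjective]
      exact hKfi.index_ne_zero
    have hmem : (MulAut.conjNormal (H := N) g) w ∈ W :=
      hmaple (Subgroup.mem_map_of_mem _ hwW)
    have : g * (N.subtype w) * g⁻¹ = N.subtype ((MulAut.conjNormal (H := N) g) w) :=
      (MulAut.conjNormal_apply g w).symm
    rw [this]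
    exact Subgroup.mem_map_of_mem _ hmem
  -- quotient by W_G
  set q : G →* G ⧸ W_G := QuotientGroup.mk' W_G with hq
  set F : Subgroup (G ⧸ W_G) := N.map q with hF
  have hFnorm : F.Normal := (inferInstance : N.Normal).map q (QuotientGroup.mk'_surjective W_G)
  set r : ↥N →* G ⧸ W_G := q.comp N.subtype with hr
  have hkerr : r.ker = W := by
    rw [hr, ← MonoidHom.comap_ker, hq, QuotientGroup.ker_mk', Subgroup.comap_subtype, hWG,
      ← Subgroup.comap_subtype, Subgroup.comap_map_eq_self_of_injective N.subtype_injective]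
  have hranger : r.range = F := by
    rw [hr, MonoidHom.range_comp, Subgroup.range_subtype, hF]
  have hFfin : Finite ↥F := by
    rw [← hranger]
    have : Finite (↥N ⧸ r.ker) := by
      rw [hkerr]
      exact @Subgroup.finite_quotient_of_finiteIndex _ _ _ hWfi
    exact Finite.of_equiv _ (QuotientGroup.quotientKerEquivRange r).toEquiv
  have hQF : IsSolvable ((G ⧸ W_G) ⧸ F) := by
    have e := QuotientGroup.quotientQuotientEquivQuotient W_G N hWGN
    exact isSolvable_congr e.symm hQ
  have hVS : VirtuallySolvable (G ⧸ W_G) :=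
    @virtuallySolvable_of_finite_normal _ _ F hFnorm hFfin hQF
  -- pull back
  obtain ⟨P, hPfi, hPs⟩ := hVS
  set P' : Subgroup G := P.comap q with hP'
  have hP'fi : P'.FiniteIndex := by
    constructor
    rw [hP', Subgroup.index_comap_of_surjective _ (QuotientGroup.mk'_surjective W_G)]
    exact hPfi.index_ne_zero
  have hWGP' : W_G ≤ P' := by
    intro x hx
    have : q x = 1 := (QuotientGroup.eq_one_iff x).mpr hx
    rw [hP', Subgroup.mem_comap, this]
    exact P.one_mem
  set g' : ↥P' →* G ⧸ W_G := q.comp P'.subtype with hg'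
  have hkerg' : g'.rangeRestrict.ker = W_G.subgroupOf P' := by
    rw [MonoidHom.ker_rangeRestrict, hg', ← MonoidHom.comap_ker, hq, QuotientGroup.ker_mk',
      Subgroup.comap_subtype]
  have i1 : IsSolvable ↥g'.rangeRestrict.ker := by
    rw [hkerg']
    exact isSolvable_congr (Subgroup.subgroupOfEquivOfLe hWGP').symm hWGs
  have i2 : IsSolvable ↥g'.range := by
    have hle : g'.range ≤ P := by
      rw [hg', MonoidHom.range_comp, Subgroup.range_subtype, hP']
      exact Subgroup.map_comap_le _ _
    exact isSolvable_subgroup_of_le hle hPs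
  have hP's : IsSolvable ↥P' :=
    solvable_of_ker_le_range g'.rangeRestrict.ker.subtype g'.rangeRestrict (hG' := i1) (hG'' := i2)
      (by rw [Subgroup.range_subtype])
  exact ⟨P', hP'fi, hP's⟩
end Main
section Assemble
variable {G X : Type*} [Group G] [Group X]

theorem virtuallySolvable_of_hom (g : G →* X) (hker : VirtuallySolvable ↥g.ker)
    (hrange : IsSolvable ↥g.range) : VirtuallySolvable G :=
  virtuallySolvable_extension g.ker hker
    (isSolvable_congr (QuotientGroup.quotientKerEquivRange g).symm hrange)

/-- The swap isomorphism between `H.subgroupOf B` and `B.subgroupOf H`. -/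
def subgroupOfSwap {A : Type*} [Group A] (B H : Subgroup A) :
    ↥(H.subgroupOf B) ≃* ↥(B.subgroupOf H) where
  toFun x := ⟨⟨(x : B), x.2⟩, (x : B).2⟩
  invFun x := ⟨⟨(x : H), x.2⟩, (x : H).2⟩
  left_inv x := by ext; rfl
  right_inv x := by ext; rfl
  map_mul' x y := by ext; rfl

end Assemble

theorem titsAlternative_aux {A : Type*} [Group A]
    (B : Subgroup A) [B.Normal]
    (hB : SatisfiesTitsAlternative B) (hQ : SatisfiesTitsAlternative (A ⧸ B)) :
    SatisfiesTitsAlternative A := by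
  intro H
  set f : ↥H →* A ⧸ B := (QuotientGroup.mk' B).comp H.subtype with hf
  have hkerf : f.ker = B.subgroupOf H := by
    rw [hf, ← MonoidHom.comap_ker, QuotientGroup.ker_mk', Subgroup.comap_subtype]
  rcases hQ f.range with hfree | hVS
  · left
    exact hasFree_iff.mp (hasFree_of_surjective f.rangeRestrict_surjective
      (hasFree_iff.mpr hfree))
  rcases hB (H.subgroupOf B) with hfree | hVSB
  · left
    have hj : Function.Injective
        ((B.subgroupOf H).subtype.comp (subgroupOfSwap B H).toMonoidHom) :=
      (B.subgroupOf H).subtype_injective.comp (subgroupOfSwap B H).injective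
    exact hasFree_iff.mp (hasFree_of_injective hj (hasFree_iff.mpr hfree))
  · right
    obtain ⟨T, hTfi, hTs⟩ := hVS
    set H₁ : Subgroup ↥H := T.comap f.rangeRestrict with hH₁
    have hH₁fi : H₁.FiniteIndex := by
      constructor
      rw [hH₁, Subgroup.index_comap_of_surjective _ f.rangeRestrict_surjective]
      exact hTfi.index_ne_zero
    refine virtuallySolvable_of_finiteIndex H₁ hH₁fi ?_
    set g : ↥H₁ →* ↥f.range := f.rangeRestrict.comp H₁.subtype with hg
    have hkerle : f.ker ≤ H₁ := by
      intro x hx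
      rw [hH₁, Subgroup.mem_comap]
      have : f.rangeRestrict x = 1 := by
        rw [← MonoidHom.mem_ker, MonoidHom.ker_rangeRestrict]
        exact hx
      rw [this]
      exact T.one_mem
    have hkerg : g.ker = f.ker.subgroupOf H₁ := by
      rw [hg, ← MonoidHom.comap_ker, MonoidHom.ker_rangeRestrict, Subgroup.comap_subtype]
    refine virtuallySolvable_of_hom g ?_ ?_
    · have e1 : ↥(B.subgroupOf H) ≃* ↥g.ker := by
        rw [hkerg, ← hkerf]
        exact (Subgroup.subgroupOfEquivOfLe hkerle).symm
      exact virtuallySolvable_congr (e1.trans (MulEquiv.refl _))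
        (virtuallySolvable_congr (subgroupOfSwap B H) hVSB)
    · have hle : g.range ≤ T := by
        rintro y ⟨x, rfl⟩
        exact x.2
      exact isSolvable_subgroup_of_le hle hTs

theorem titsAlternative_of_normal_of_quotient {A : Type*} [Group A]
    (B : Subgroup A) [B.Normal]
    (hB : SatisfiesTitsAlternative B) (hQ : SatisfiesTitsAlternative (A ⧸ B)) :
    SatisfiesTitsAlternative A := by
  exact titsAlternative_aux B hB hQ
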